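/- Let S, P : ℝ → (k×k real matrices) be curves differentiable at t₀, with S(t₀) invertible, and suppose there exist k×k real matrices M, A and matrices B (k×s), Q (s×s) such that S'(t₀) = S(t₀)·M and P'(t₀) = A·P(t₀) + P(t₀)·Aᵀ + B·Q·Bᵀ. Then the curve t ↦ S(t)·P(t)·S(t)ᵀ has derivative at t₀ equal to Ā·P̄ + P̄·Āᵀ + B̄·Q·B̄ᵀ, where P̄ := S(t₀)·P(t₀)·S(t₀)ᵀ, Ā := S(t₀)·(A + M)·S(t₀)⁻¹, and B̄ := S(t₀)·B. -/

import Mathlib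

open Matrix

attribute [local instance] Matrix.frobeniusNormedAddCommGroup Matrix.frobeniusNormedSpace

attribute [local instance] Matrix.frobeniusNormedRing Matrix.frobeniusNormedAlgebra

set_option maxHeartbeats 1000000 in
theorem riccati_change_of_variables
    {k s : Type*} [Fintype k] [DecidableEq k] [Fintype s]
    (S P : ℝ → Matrix k k ℝ) (t₀ : ℝ) (hS : IsUnit (S t₀))
    (M A : Matrix k k ℝ) (B : Matrix k s ℝ) (Q : Matrix s s ℝ)
    (hS' : HasDerivAt S (S t₀ * M) t₀)
    (hP' : HasDerivAt P (A * P t₀ + P t₀ * Aᵀ + B * Q * Bᵀ) t₀) :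
    let Pb := S t₀ * P t₀ * (S t₀)ᵀ
    let Ab := S t₀ * (A + M) * (S t₀)⁻¹
    let Bb := S t₀ * B
    HasDerivAt (fun t => S t * P t * (S t)ᵀ) (Ab * Pb + Pb * Abᵀ + Bb * Q * Bbᵀ) t₀ := by
  intro Pb Ab Bb
  have hT : HasDerivAt (fun t => (S t)ᵀ) ((S t₀ * M)ᵀ) t₀ := by
    have h := (LinearMap.toContinuousLinearMap
      (Matrix.transposeLinearEquiv k k ℝ ℝ).toLinearMap).hasFDerivAt.comp_hasDerivAt t₀ hS'
    exact h
  have hmain := (hS'.mul hP').mul hT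
  refine hmain.congr_deriv ?_
  rw [Pi.mul_apply]
  have hdet : IsUnit (S t₀).det := (Matrix.isUnit_iff_isUnit_det _).mp hS
  have hinv : (S t₀)⁻¹ * S t₀ = 1 := Matrix.nonsing_inv_mul _ hdet
  have key : ∀ X : Matrix k k ℝ, (S t₀)⁻¹ * (S t₀ * X) = X := fun X => by
    rw [← Matrix.mul_assoc, hinv, Matrix.one_mul]
  simp only [Pb, Ab, Bb, Matrix.transpose_mul, Matrix.transpose_nonsing_inv, mul_add, add_mul,
    Matrix.mul_assoc, key]
  have keyT : ∀ X : Matrix k k ℝ, (S t₀)ᵀ * (((S t₀)ᵀ)⁻¹ * X) = X := fun X => by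
    rw [← Matrix.mul_assoc, Matrix.mul_nonsing_inv _ (by simpa using hdet), Matrix.one_mul]
  simp only [Matrix.transpose_add, Matrix.transpose_mul, Matrix.transpose_nonsing_inv,
    Matrix.transpose_transpose, mul_add, add_mul, Matrix.mul_assoc, keyT]
  abel
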